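/- Let C be a skeletal finite EI category satisfying the UFP such that all automorphism groups of objects have orders invertible in the field k. Let α : x → y be an unfactorizable morphism, H = Aut_C(y), H₀ = Stab_H(α) = {h ∈ H : h∘α = α}, and e = (1/|H₀|) Σ_{h ∈ H₀} h ∈ kC. Then e is an idempotent of kC and the left kC-module kC·α is isomorphic to the projective module kC·e; in particular kC·α is a projective kC-module. -/

import Mathlib

open CategoryTheory
open scoped Classical

/-- Witness that `A` is the category algebra `kC` of the finite category `C`: it has a
`k`-basis indexed by the morphisms of `C`, the product of two basis elements is the basis
element of their composite when composable and `0` otherwise, and the identity element is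
the sum of the identity morphisms. -/
structure CategoryAlgebraData (k : Type*) [Field k] (C : Type*) [Category C] [Fintype C]
    (A : Type*) [Ring A] [Algebra k A] where
  basis : Module.Basis (Σ x y : C, x ⟶ y) k A
  basis_mul_basis : ∀ (x₁ y₁ x₂ y₂ : C) (f : x₁ ⟶ y₁) (g : x₂ ⟶ y₂),
    basis ⟨x₁, y₁, f⟩ * basis ⟨x₂, y₂, g⟩ =
      if h : y₂ = x₁ then basis ⟨x₂, y₁, g ≫ eqToHom h ≫ f⟩ else 0
  one_def : (1 : A) = ∑ x : C, basis ⟨x, x, 𝟙 x⟩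

/-- A morphism is unfactorizable if it is not an isomorphism and in any factorization into
two morphisms one factor is an isomorphism. -/
def Unfactorizable {C : Type*} [Category C] {x z : C} (α : x ⟶ z) : Prop :=
  ¬ IsIso α ∧ ∀ (y : C) (β : x ⟶ y) (γ : y ⟶ z), α = β ≫ γ → IsIso β ∨ IsIso γ

/-- A path in a category all of whose edges are unfactorizable morphisms. -/
inductive PathUnfact {C : Type*} [Category C] : ∀ {x y : C}, Quiver.Path x y → Prop
  | nil {x : C} : PathUnfact (Quiver.Path.nil : Quiver.Path x x)
  | cons {x y z : C} {p : Quiver.Path x y} {e : y ⟶ z} :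
      PathUnfact p → Unfactorizable e → PathUnfact (p.cons e)

/-- `TwistedBy p q g'` says that the paths `p = (α₁, …, αₙ)` and `q = (β₁, …, βₙ)` pass
through the same objects and there are automorphisms `hᵢ` of the intermediate objects with
`β₁ = h₁ ∘ α₁`, `βᵢ = hᵢ ∘ αᵢ ∘ hᵢ₋₁⁻¹`, and `βₙ = g' ∘ αₙ ∘ hₙ₋₁⁻¹`, where `g'` is the
final twist at the common target. -/
inductive TwistedBy {C : Type*} [Category C] :
    ∀ {x y : C}, Quiver.Path x y → Quiver.Path x y → (y ≅ y) → Prop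
  | nil {x : C} :
      TwistedBy (Quiver.Path.nil : Quiver.Path x x) Quiver.Path.nil (Iso.refl x)
  | cons {x w y : C} {p q : Quiver.Path x w} (g : w ≅ w) (g' : y ≅ y) (e : w ⟶ y) :
      TwistedBy p q g → TwistedBy (p.cons e) (q.cons (g.inv ≫ e ≫ g'.hom)) g'

/-- The Unique Factorization Property: any two decompositions of a non-isomorphism into
unfactorizable morphisms have the same length, pass through the same intermediate objects,
and differ only by automorphisms of the intermediate objects. -/
def SatisfiesUFP (C : Type*) [Category C] : Prop :=
  ∀ {x y : C} (p q : Quiver.Path x y), PathUnfact p → PathUnfact q →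
    ¬ IsIso (composePath p) → composePath p = composePath q → TwistedBy p q (Iso.refl y)

section Aux
variable {C : Type*} [Category C]

/-- In an EI category, a pair of opposite morphisms consists of isomorphisms. -/
lemma aux_iso (hEI : ∀ (x : C) (f : x ⟶ x), IsIso f) {u v : C} (f : u ⟶ v) (g : v ⟶ u) :
    IsIso f := by
  have ha : IsIso (f ≫ g) := hEI u _
  have hb : IsIso (g ≫ f) := hEI v _
  have h1 : f ≫ (g ≫ inv (f ≫ g)) = 𝟙 u := by
    rw [← Category.assoc]; exact IsIso.hom_inv_id _
  have h2 : (inv (g ≫ f) ≫ g) ≫ f = 𝟙 v := by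
    rw [Category.assoc]; exact IsIso.inv_hom_id _
  have heq : g ≫ inv (f ≫ g) = inv (g ≫ f) ≫ g := by
    calc g ≫ inv (f ≫ g) = (𝟙 v) ≫ (g ≫ inv (f ≫ g)) := by rw [Category.id_comp]
    _ = ((inv (g ≫ f) ≫ g) ≫ f) ≫ (g ≫ inv (f ≫ g)) := by rw [h2]
    _ = (inv (g ≫ f) ≫ g) ≫ (f ≫ (g ≫ inv (f ≫ g))) := by simp only [Category.assoc]
    _ = inv (g ≫ f) ≫ g := by rw [h1, Category.comp_id]
  exact ⟨⟨g ≫ inv (f ≫ g), h1, by rw [heq]; exact h2⟩⟩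

lemma aux_not_iso_comp (hEI : ∀ (x : C) (f : x ⟶ x), IsIso f) {u v w : C}
    (α : u ⟶ v) (hα : ¬ IsIso α) (f : v ⟶ w) : ¬ IsIso (α ≫ f) := by
  intro hi
  exact hα (aux_iso hEI α (f ≫ inv (α ≫ f)))

lemma pathUnfact_comp {x y z : C} {p : Quiver.Path x y} {q : Quiver.Path y z}
    (hp : PathUnfact p) (hq : PathUnfact q) : PathUnfact (p.comp q) := by
  induction hq with
  | nil => exact hp
  | cons hq' he ih => exact PathUnfact.cons ih he

lemma path_front_unique {x v : C} {w w' : C} (β : x ⟶ w) (β' : x ⟶ w')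
    (p : Quiver.Path w v) : ∀ (p' : Quiver.Path w' v),
    (Quiver.Path.nil.cons β).comp p = (Quiver.Path.nil.cons β').comp p' →
    w = w' ∧ HEq β β' ∧ HEq p p' := by
  induction p with
  | nil =>
    intro p' hpq
    cases p' with
    | nil =>
      simp only [Quiver.Path.comp_nil] at hpq
      exact ⟨rfl, Quiver.Path.hom_heq_of_cons_eq_cons hpq, HEq.rfl⟩
    | cons p₂ e₂ =>
      simp only [Quiver.Path.comp_nil, Quiver.Path.comp_cons] at hpq
      have h1 := Quiver.Path.obj_eq_of_cons_eq_cons hpq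
      subst h1
      have h2 := eq_of_heq (Quiver.Path.heq_of_cons_eq_cons hpq)
      have := congrArg Quiver.Path.length h2
      simp [Quiver.Path.length_comp] at this
      omega
  | cons p₁ e₁ ih =>
    intro p' hpq
    cases p' with
    | nil =>
      simp only [Quiver.Path.comp_nil, Quiver.Path.comp_cons] at hpq
      have h1 := Quiver.Path.obj_eq_of_cons_eq_cons hpq
      subst h1
      have h2 := eq_of_heq (Quiver.Path.heq_of_cons_eq_cons hpq)
      have := congrArg Quiver.Path.length h2
      simp [Quiver.Path.length_comp] at this
    | cons p₂ e₂ =>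
      simp only [Quiver.Path.comp_cons] at hpq
      have h1 := Quiver.Path.obj_eq_of_cons_eq_cons hpq
      subst h1
      have h2 := eq_of_heq (Quiver.Path.heq_of_cons_eq_cons hpq)
      have h3 := eq_of_heq (Quiver.Path.hom_heq_of_cons_eq_cons hpq)
      obtain ⟨hw, hβ, hp⟩ := ih p₂ h2
      subst hw
      refine ⟨rfl, hβ, ?_⟩
      rw [eq_of_heq hp, h3]

lemma twisted_extract {x : C} {v : C} {p q : Quiver.Path x v} {g : v ≅ v}
    (ht : TwistedBy p q g) :
    (p.length = 0 ∧ q.length = 0 ∧ g.hom = 𝟙 v) ∨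
    ∃ (w : C) (β : x ⟶ w) (h : w ≅ w) (p' q' : Quiver.Path w v),
      p = (Quiver.Path.nil.cons β).comp p' ∧
      q = (Quiver.Path.nil.cons (β ≫ h.hom)).comp q' ∧
      composePath q' = h.inv ≫ composePath p' ≫ g.hom := by
  induction ht with
  | nil => exact Or.inl ⟨rfl, rfl, rfl⟩
  | @cons w₀ y₀ p q g g' e ht ih =>
    right
    rcases ih with ⟨hp0, hq0, ghom⟩ | ⟨w, β, h, p', q', hp, hq, hcomp⟩
    · obtain rfl := Quiver.Path.eq_of_length_zero p hp0
      obtain rfl := Quiver.Path.eq_nil_of_length_zero p hp0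
      obtain rfl := Quiver.Path.eq_nil_of_length_zero q hq0
      have ginv : g.inv = 𝟙 x := by
        have := g.inv_hom_id
        rwa [ghom, Category.comp_id] at this
      refine ⟨y₀, e, g', Quiver.Path.nil, Quiver.Path.nil, ?_, ?_, ?_⟩
      · rfl
      · rw [ginv, Category.id_comp]; rfl
      · simp
    · subst hp; subst hq
      refine ⟨w, β, h, p'.cons e, q'.cons (g.inv ≫ e ≫ g'.hom), rfl, rfl, ?_⟩
      simp only [composePath_cons, hcomp]
      simp

end Aux

section Aux2
variable {C : Type*} [Category C] [Fintype C]

lemma decomp_exists (hEI : ∀ (x : C) (f : x ⟶ x), IsIso f) :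
    ∀ {u v : C} (f : u ⟶ v), ¬ IsIso f →
      ∃ p : Quiver.Path u v, PathUnfact p ∧ composePath p = f := by
  suffices H : ∀ (n : ℕ) {u v : C} (f : u ⟶ v),
      (Finset.univ.filter (fun z : C => Nonempty (u ⟶ z) ∧ Nonempty (z ⟶ v))).card < n →
      ¬ IsIso f → ∃ p : Quiver.Path u v, PathUnfact p ∧ composePath p = f by
    intro u v f hf
    exact H _ f (Nat.lt_succ_self _) hf
  intro n
  induction n with
  | zero => intro u v f h; omega
  | succ n ih =>
    intro u v f hcard hf
    by_cases unf : Unfactorizable f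
    · exact ⟨Quiver.Path.nil.cons f, PathUnfact.cons PathUnfact.nil unf, by simp⟩
    · have hfac : ∃ (w : C) (β : u ⟶ w) (γ : w ⟶ v), f = β ≫ γ ∧ ¬ IsIso β ∧ ¬ IsIso γ := by
        unfold Unfactorizable at unf
        push_neg at unf
        obtain ⟨w, β, γ, h1, h2⟩ := unf hf
        exact ⟨w, β, γ, h1, h2.1, h2.2⟩
      obtain ⟨w, β, γ, hfac, hβ, hγ⟩ := hfac
      set Suv := Finset.univ.filter (fun z : C => Nonempty (u ⟶ z) ∧ Nonempty (z ⟶ v)) with hSuv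
      have hlt1 : (Finset.univ.filter (fun z : C => Nonempty (u ⟶ z) ∧ Nonempty (z ⟶ w))).card
          < Suv.card := by
        apply Finset.card_lt_card
        constructor
        · intro z hz
          simp only [hSuv, Finset.mem_filter, Finset.mem_univ, true_and] at hz ⊢
          exact ⟨hz.1, hz.2.map (fun δ => δ ≫ γ)⟩
        · intro hsub
          have hv : v ∈ Suv :=
            Finset.mem_filter.mpr ⟨Finset.mem_univ _, ⟨f⟩, ⟨𝟙 v⟩⟩
          have := hsub hv
          simp only [Finset.mem_filter, Finset.mem_univ, true_and] at this
          obtain ⟨δ⟩ := this.2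
          exact hγ (aux_iso hEI γ δ)
      have hlt2 : (Finset.univ.filter (fun z : C => Nonempty (w ⟶ z) ∧ Nonempty (z ⟶ v))).card
          < Suv.card := by
        apply Finset.card_lt_card
        constructor
        · intro z hz
          simp only [hSuv, Finset.mem_filter, Finset.mem_univ, true_and] at hz ⊢
          exact ⟨hz.1.map (fun δ => β ≫ δ), hz.2⟩
        · intro hsub
          have hu : u ∈ Suv :=
            Finset.mem_filter.mpr ⟨Finset.mem_univ _, ⟨𝟙 u⟩, ⟨f⟩⟩
          have := hsub hu
          simp only [Finset.mem_filter, Finset.mem_univ, true_and] at this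
          obtain ⟨δ⟩ := this.1
          exact hβ (aux_iso hEI β δ)
      have hn : Suv.card ≤ n := Nat.lt_succ_iff.mp hcard
      obtain ⟨pβ, hpβ, hcβ⟩ := ih β (lt_of_lt_of_le hlt1 hn) hβ
      obtain ⟨pγ, hpγ, hcγ⟩ := ih γ (lt_of_lt_of_le hlt2 hn) hγ
      exact ⟨pβ.comp pγ, pathUnfact_comp hpβ hpγ,
        by rw [composePath_comp, hcβ, hcγ, hfac]⟩

lemma fiber_claim (hEI : ∀ (x : C) (f : x ⟶ x), IsIso f) (hUFP : SatisfiesUFP C)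
    {x y : C} (α : x ⟶ y) (hα : Unfactorizable α) {v : C} (f f' : y ⟶ v)
    (hff : α ≫ f = α ≫ f') :
    ∃ h : Aut y, (α ≫ h.hom = α) ∧ f' = h.hom ≫ f := by
  by_cases hf : IsIso f
  · have hi : IsIso (f' ≫ inv f) := hEI y _
    refine ⟨asIso (f' ≫ inv f), ?_, by simp⟩
    show α ≫ (f' ≫ inv f) = α
    rw [← Category.assoc, ← hff]
    simp
  · have hf' : ¬ IsIso f' := by
      intro hi
      apply hf
      have : IsIso (f ≫ inv f') := hEI y _
      have hfe : f = (f ≫ inv f') ≫ f' := by simp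
      rw [hfe]
      infer_instance
    obtain ⟨pf, hpf, hcf⟩ := decomp_exists hEI f hf
    obtain ⟨pf', hpf', hcf'⟩ := decomp_exists hEI f' hf'
    set P := (Quiver.Path.nil.cons α).comp pf with hP
    set Q := (Quiver.Path.nil.cons α).comp pf' with hQ
    have hPU : PathUnfact P := pathUnfact_comp (PathUnfact.cons PathUnfact.nil hα) hpf
    have hQU : PathUnfact Q := pathUnfact_comp (PathUnfact.cons PathUnfact.nil hα) hpf'
    have hcP : composePath P = α ≫ f := by
      rw [hP, composePath_comp, hcf]; simp
    have hcQ : composePath Q = α ≫ f' := by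
      rw [hQ, composePath_comp, hcf']; simp
    have hni : ¬ IsIso (composePath P) := by
      rw [hcP]; exact aux_not_iso_comp hEI α hα.1 f
    have ht := hUFP P Q hPU hQU hni (by rw [hcP, hcQ]; exact hff)
    rcases twisted_extract ht with ⟨hl, _, _⟩ | ⟨w, β, h, p', q', hp, hq, hcomp⟩
    · rw [hP] at hl
      simp [Quiver.Path.length_comp] at hl
    · obtain ⟨hw, hβ, hpp⟩ := path_front_unique α β pf p' (hP ▸ hp)
      subst hw
      have hβ' : α = β := eq_of_heq hβ
      have hpp' : pf = p' := eq_of_heq hpp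
      obtain ⟨_, hβ2, hqq⟩ := path_front_unique α (β ≫ h.hom) pf' q' (hQ ▸ hq)
      have hβ2' : α = β ≫ h.hom := eq_of_heq hβ2
      have hqq' : pf' = q' := eq_of_heq hqq
      have hstab : α ≫ h.hom = α := by
        rw [← hβ'] at hβ2'
        exact hβ2'.symm
      have hstab' : α ≫ h.inv = α := by
        calc α ≫ h.inv = (α ≫ h.hom) ≫ h.inv := by rw [hstab]
        _ = α := by simp
      refine ⟨h.symm, hstab', ?_⟩
      show f' = h.inv ≫ f
      rw [← hcf', hqq', hcomp, ← hpp', hcf]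
      simp
  end Aux2

/-- For an unfactorizable morphism `α : x ⟶ y` in a finite free EI category (a skeletal
finite EI category with the UFP) whose automorphism group orders are invertible in `k`,
the averaging idempotent `e = |H₀|⁻¹ Σ_{h ∈ H₀} h` over the stabilizer
`H₀ = Stab_{Aut(y)}(α)` is idempotent in `kC`, and the left ideal `kC·α` is isomorphic to
the projective module `kC·e`; in particular `kC·α` is projective. -/
theorem stmt10 {k : Type*} [Field k] {C : Type*} [Category C] [Fintype C]
    [∀ x y : C, Finite (x ⟶ y)]
    (hEI : ∀ (x : C) (f : x ⟶ x), IsIso f)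
    (hskel : ∀ x y : C, (x ≅ y) → x = y)
    (hUFP : SatisfiesUFP C)
    (hord : ∀ x : C, (Nat.card (Aut x) : k) ≠ 0)
    {A : Type*} [Ring A] [Algebra k A] (hA : CategoryAlgebraData k C A)
    {x y : C} (α : x ⟶ y) (hα : Unfactorizable α)
    (e : A)
    (he : e = (Nat.card {h : Aut y // α ≫ h.hom = α} : k)⁻¹ •
      ∑ᶠ h : Aut y, if α ≫ h.hom = α then hA.basis ⟨y, y, h.hom⟩ else 0) :
    IsIdempotentElem e ∧
    Nonempty ((Ideal.span {hA.basis ⟨x, y, α⟩} : Ideal A) ≃ₗ[A] (Ideal.span {e} : Ideal A)) ∧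
    Module.Projective A (Ideal.span {hA.basis ⟨x, y, α⟩} : Ideal A) := by
  classical
  haveI : Finite (Aut y) :=
    Finite.of_injective (fun h : Aut y => (h.hom, h.inv))
      (fun a b hab => Iso.ext (congrArg Prod.fst hab))
  haveI : Fintype (Aut y) := Fintype.ofFinite _
  haveI instF : ∀ (u v : C), Fintype (u ⟶ v) := fun _ _ => Fintype.ofFinite _
  set Bα : A := hA.basis ⟨x, y, α⟩ with hBα
  -- the stabilizer is a subgroup
  have hmem_mul : ∀ a b : Aut y, α ≫ a.hom = α → α ≫ b.hom = α → α ≫ (a * b).hom = α := by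
    intro a b ha hb
    show α ≫ (b.hom ≫ a.hom) = α
    rw [← Category.assoc, hb, ha]
  have hmem_inv : ∀ a : Aut y, α ≫ a.hom = α → α ≫ (a⁻¹).hom = α := by
    intro a ha
    show α ≫ a.inv = α
    calc α ≫ a.inv = (α ≫ a.hom) ≫ a.inv := by rw [ha]
    _ = α := by rw [Category.assoc, Iso.hom_inv_id (a : y ≅ y), Category.comp_id]
  set H₀ : Subgroup (Aut y) :=
    { carrier := {h | α ≫ h.hom = α}
      one_mem' := by show α ≫ 𝟙 y = α; simp
      mul_mem' := fun {a b} ha hb => hmem_mul a b ha hb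
      inv_mem' := fun {a} ha => hmem_inv a ha } with hH₀
  set S₀ : Finset (Aut y) := Finset.univ.filter (fun h => α ≫ h.hom = α) with hS₀
  set n : ℕ := S₀.card with hn
  have hcard : Nat.card {h : Aut y // α ≫ h.hom = α} = n := by
    rw [Nat.card_eq_fintype_card, Fintype.card_subtype]
  have hnk : ((n : k)) ≠ 0 := by
    have hdvd : Nat.card H₀ ∣ Nat.card (Aut y) := Subgroup.card_subgroup_dvd_card H₀
    have hc2 : Nat.card H₀ = n := by
      rw [Nat.card_eq_fintype_card, Fintype.card_subtype]
      congr 1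
    obtain ⟨m, hm⟩ := hdvd
    intro h0
    apply hord y
    rw [hm, hc2, Nat.cast_mul, h0, zero_mul]
  have he' : e = (n : k)⁻¹ • ∑ h ∈ S₀, hA.basis ⟨y, y, h.hom⟩ := by
    rw [he, finsum_eq_sum_of_fintype, hcard, hS₀, Finset.sum_filter]
  -- basic products
  have hBaB : ∀ (h : Aut y), α ≫ h.hom = α → hA.basis ⟨y, y, h.hom⟩ * Bα = Bα := by
    intro h hh
    have := hA.basis_mul_basis y y x y h.hom α
    rw [dif_pos rfl] at this
    rw [hBα]
    simpa [hh] using this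
  have heBα : e * Bα = Bα := by
    rw [he', smul_mul_assoc, Finset.sum_mul]
    have h1 : ∑ h ∈ S₀, hA.basis ⟨y, y, h.hom⟩ * Bα = ∑ _h ∈ S₀, Bα :=
      Finset.sum_congr rfl (fun h hh => hBaB h (Finset.mem_filter.mp hh).2)
    rw [h1, Finset.sum_const, ← hn, ← Nat.cast_smul_eq_nsmul k, smul_smul,
      inv_mul_cancel₀ hnk, one_smul]
  have hmulhom : ∀ (a b : Aut y),
      hA.basis ⟨y, y, a.hom⟩ * hA.basis ⟨y, y, b.hom⟩ = hA.basis ⟨y, y, (a * b).hom⟩ := by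
    intro a b
    have := hA.basis_mul_basis y y y y a.hom b.hom
    rw [dif_pos rfl] at this
    simp only [eqToHom_refl, Category.id_comp] at this
    exact this
  have hiff : ∀ (h h' : Aut y), α ≫ h.hom = α → (α ≫ h'.hom = α ↔ α ≫ (h * h').hom = α) := by
    intro h h' hh
    constructor
    · intro hh'; exact hmem_mul h h' hh hh'
    · intro hm
      have := hmem_mul h⁻¹ (h * h') (hmem_inv h hh) hm
      rwa [inv_mul_cancel_left] at this
  have hBe : ∀ (h : Aut y), h ∈ S₀ → hA.basis ⟨y, y, h.hom⟩ * e = e := by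
    intro h hh
    have hh' : α ≫ h.hom = α := (Finset.mem_filter.mp hh).2
    rw [he', mul_smul_comm, Finset.mul_sum]
    congr 1
    calc ∑ h' ∈ S₀, hA.basis ⟨y, y, h.hom⟩ * hA.basis ⟨y, y, h'.hom⟩
        = ∑ h' ∈ S₀, hA.basis ⟨y, y, (h * h').hom⟩ :=
          Finset.sum_congr rfl (fun h' _ => hmulhom h h')
    _ = ∑ h'' ∈ S₀, hA.basis ⟨y, y, h''.hom⟩ := by
        apply Finset.sum_equiv (Equiv.mulLeft h)
        · intro h'
          simp only [hS₀, Finset.mem_filter, Finset.mem_univ, true_and, Equiv.coe_mulLeft]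
          exact hiff h h' hh'
        · intro h' _
          simp [Equiv.coe_mulLeft]
  have hide : IsIdempotentElem e := by
    show e * e = e
    nth_rewrite 1 [he']
    rw [smul_mul_assoc, Finset.sum_mul]
    have h1 : ∑ h ∈ S₀, hA.basis ⟨y, y, h.hom⟩ * e = ∑ _h ∈ S₀, e :=
      Finset.sum_congr rfl (fun h hh => hBe h hh)
    rw [h1, Finset.sum_const, ← hn, ← Nat.cast_smul_eq_nsmul k, smul_smul,
      inv_mul_cancel₀ hnk, one_smul]
  -- the k-linear comparison map
  set fib : ∀ (v : C), (x ⟶ v) → Finset (y ⟶ v) :=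
    fun v g => Finset.univ.filter (fun f => α ≫ f = g) with hfib
  set T : (Σ u v : C, u ⟶ v) → A := fun s =>
    if hu : s.1 = x then
      (((fib s.2.1 (eqToHom hu.symm ≫ s.2.2)).card : k))⁻¹ •
        ∑ f ∈ fib s.2.1 (eqToHom hu.symm ≫ s.2.2), hA.basis ⟨y, s.2.1, f⟩
    else 0 with hT
  set Ψ : A →ₗ[k] A := hA.basis.constr ℕ T with hΨ
  have hKEY1 : ∀ (s : Σ u v : C, u ⟶ v), Ψ (hA.basis s * Bα) = hA.basis s * e := by
    rintro ⟨u, v, f⟩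
    rw [hBα, hA.basis_mul_basis u v x y f α]
    by_cases hyu : y = u
    · subst hyu
      rw [dif_pos rfl]
      have h2 : α ≫ eqToHom rfl ≫ f = α ≫ f := by simp
      rw [h2, hΨ, Module.Basis.constr_basis, hT]
      simp only [eq_self_iff_true, dite_true]
      have h3 : ∀ (pf : x = x) (g : x ⟶ v), eqToHom pf ≫ g = g := by
        intro pf g
        rw [Subsingleton.elim pf rfl]
        simp
      rw [h3]
      -- right hand side
      have h4 : hA.basis ⟨y, v, f⟩ * e
          = (n : k)⁻¹ • ∑ h ∈ S₀, hA.basis ⟨y, v, h.hom ≫ f⟩ := by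
        rw [he', mul_smul_comm, Finset.mul_sum]
        congr 1
        apply Finset.sum_congr rfl
        intro h _
        have := hA.basis_mul_basis y v y y f h.hom
        rw [dif_pos rfl] at this
        simpa using this
      rw [h4]
      -- the counting argument
      set t := fib v (α ≫ f) with ht
      set st := S₀.filter (fun h => h.hom ≫ f = f) with hst
      have hmapsto : ∀ h ∈ S₀, h.hom ≫ f ∈ t := by
        intro h hh
        rw [ht, hfib]
        simp only [Finset.mem_filter, Finset.mem_univ, true_and]
        rw [← Category.assoc, (Finset.mem_filter.mp hh).2]
      have hfibcard : ∀ f' ∈ t, (S₀.filter (fun h => h.hom ≫ f = f')).card = st.card := by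
        intro f' hf'
        have h797 : α ≫ f' = α ≫ f := by
          have := Finset.mem_filter.mp (ht ▸ hf')
          simpa [hfib] using this.2
        obtain ⟨h₁, hh₁, hf'eq⟩ := fiber_claim hEI hUFP α hα f f' h797.symm
        apply Finset.card_bij' (i := fun h _ => h * h₁⁻¹) (j := fun g _ => g * h₁)
        · intro a ha
          obtain ⟨ha1, ha2⟩ := Finset.mem_filter.mp ha
          rw [hst]
          refine Finset.mem_filter.mpr ⟨?_, ?_⟩
          · simp only [hS₀, Finset.mem_filter, Finset.mem_univ, true_and] at ha1 ⊢
            exact hmem_mul a h₁⁻¹ ha1 (hmem_inv h₁ hh₁)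
          · show (a * h₁⁻¹).hom ≫ f = f
            have : (a * h₁⁻¹).hom = h₁.inv ≫ a.hom := rfl
            rw [this, Category.assoc, ha2, hf'eq, ← Category.assoc]
            rw [Iso.inv_hom_id (h₁ : y ≅ y), Category.id_comp]
        · intro b hb
          obtain ⟨hb1, hb2⟩ := Finset.mem_filter.mp (hst ▸ hb)
          refine Finset.mem_filter.mpr ⟨?_, ?_⟩
          · simp only [hS₀, Finset.mem_filter, Finset.mem_univ, true_and] at hb1 ⊢
            exact hmem_mul b h₁ hb1 hh₁
          · show (b * h₁).hom ≫ f = f'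
            have : (b * h₁).hom = h₁.hom ≫ b.hom := rfl
            rw [this, Category.assoc, hb2, hf'eq]
        · intro a _; group
        · intro b _; group
      have hsum : ∑ h ∈ S₀, hA.basis ⟨y, v, h.hom ≫ f⟩
          = st.card • ∑ f' ∈ t, hA.basis ⟨y, v, f'⟩ := by
        rw [← Finset.sum_fiberwise_of_maps_to hmapsto (fun h => hA.basis ⟨y, v, h.hom ≫ f⟩),
          Finset.smul_sum]
        apply Finset.sum_congr rfl
        intro f' hf'
        rw [Finset.sum_congr rfl (fun h hh => by rw [(Finset.mem_filter.mp hh).2]),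
          Finset.sum_const, hfibcard f' hf']
      have hcardn : (n : k) = (t.card : k) * (st.card : k) := by
        have := Finset.card_eq_sum_card_fiberwise hmapsto
        rw [Finset.sum_congr rfl (fun f' hf' => hfibcard f' hf'), Finset.sum_const,
          smul_eq_mul] at this
        rw [hn, this, Nat.cast_mul]
      have htc : ((t.card : k)) ≠ 0 := fun h0 => hnk (by rw [hcardn, h0, zero_mul])
      have hsc : ((st.card : k)) ≠ 0 := fun h0 => hnk (by rw [hcardn, h0, mul_zero])
      rw [hsum, ← Nat.cast_smul_eq_nsmul k, smul_smul]
      congr 1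
      rw [hcardn]
      field_simp
    · rw [dif_neg hyu, map_zero, he', mul_smul_comm, Finset.mul_sum]
      have h5 : ∑ h ∈ S₀, hA.basis ⟨u, v, f⟩ * hA.basis ⟨y, y, h.hom⟩ = ∑ _h ∈ S₀, (0 : A) := by
        apply Finset.sum_congr rfl
        intro h _
        rw [hA.basis_mul_basis, dif_neg hyu]
      rw [h5, Finset.sum_const, smul_zero, smul_zero]
  have hKEY : ∀ r : A, Ψ (r * Bα) = r * e := by
    have hL : Ψ.comp (LinearMap.mulRight k Bα) = LinearMap.mulRight k e := by
      apply Module.Basis.ext hA.basis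
      intro s
      simpa using hKEY1 s
    intro r
    have := LinearMap.congr_fun hL r
    simpa using this
  -- span membership helpers
  have memI : ∀ r : A, r * Bα ∈ Ideal.span ({Bα} : Set A) := fun r =>
    Submodule.mem_span_singleton.mpr ⟨r, by simp [smul_eq_mul]⟩
  have memJ : ∀ r : A, r * e ∈ Ideal.span ({e} : Set A) := fun r =>
    Submodule.mem_span_singleton.mpr ⟨r, by simp [smul_eq_mul]⟩
  have spanI : ∀ z : A, z ∈ Ideal.span ({Bα} : Set A) → ∃ r : A, z = r * Bα := by
    intro z hz
    obtain ⟨r, hr⟩ := Submodule.mem_span_singleton.mp hz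
    exact ⟨r, by rw [← hr, smul_eq_mul]⟩
  have spanJ : ∀ z : A, z ∈ Ideal.span ({e} : Set A) → ∃ r : A, z = r * e := by
    intro z hz
    obtain ⟨r, hr⟩ := Submodule.mem_span_singleton.mp hz
    exact ⟨r, by rw [← hr, smul_eq_mul]⟩
  -- the A-linear maps
  set φ : (Ideal.span ({e} : Set A) : Ideal A) →ₗ[A] (Ideal.span ({Bα} : Set A) : Ideal A) :=
    { toFun := fun z => ⟨(z : A) * Bα, memI (z : A)⟩
      map_add' := by intro z w; apply Subtype.ext; show ((z : A) + w) * Bα = _; rw [add_mul]; rfl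
      map_smul' := by
        intro a z; apply Subtype.ext
        show (a • (z : A)) * Bα = a • ((z : A) * Bα)
        rw [smul_eq_mul, smul_eq_mul, mul_assoc] } with hφ
  set ψ : (Ideal.span ({Bα} : Set A) : Ideal A) →ₗ[A] (Ideal.span ({e} : Set A) : Ideal A) :=
    { toFun := fun z => ⟨Ψ (z : A), by
        obtain ⟨r, hr⟩ := spanI (z : A) z.2
        rw [hr, hKEY r]
        exact memJ r⟩
      map_add' := by intro z w; apply Subtype.ext; show Ψ ((z : A) + w) = _; rw [map_add]; rfl
      map_smul' := by
        intro a z; apply Subtype.ext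
        show Ψ (a • (z : A)) = a • Ψ (z : A)
        obtain ⟨r, hr⟩ := spanI (z : A) z.2
        rw [hr, smul_eq_mul, smul_eq_mul, ← mul_assoc, hKEY (a * r), hKEY r, mul_assoc] } with hψ
  have hψφ : ψ.comp φ = LinearMap.id := by
    apply LinearMap.ext
    rintro ⟨z, hz⟩
    apply Subtype.ext
    show Ψ (z * Bα) = z
    obtain ⟨r, hr⟩ := spanJ z hz
    rw [hr, mul_assoc, heBα, hKEY r]
  have hφψ : φ.comp ψ = LinearMap.id := by
    apply LinearMap.ext
    rintro ⟨z, hz⟩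
    apply Subtype.ext
    show Ψ z * Bα = z
    obtain ⟨r, hr⟩ := spanI z hz
    rw [hr, hKEY r, mul_assoc, heBα]
  set equiv : (Ideal.span ({Bα} : Set A) : Ideal A) ≃ₗ[A] (Ideal.span ({e} : Set A) : Ideal A) :=
    LinearEquiv.ofLinear ψ φ hψφ hφψ with hequiv
  -- projectivity
  set pJ : A →ₗ[A] (Ideal.span ({e} : Set A) : Ideal A) :=
    { toFun := fun r => ⟨r * e, memJ r⟩
      map_add' := by intro a b; apply Subtype.ext; exact add_mul a b e
      map_smul' := by intro a b; apply Subtype.ext; show (a • b) * e = a • (b * e);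
                      rw [smul_eq_mul, smul_eq_mul, mul_assoc] } with hpJ
  have hsplit : pJ.comp (Ideal.span ({e} : Set A) : Ideal A).subtype = LinearMap.id := by
    apply LinearMap.ext
    rintro ⟨z, hz⟩
    apply Subtype.ext
    show z * e = z
    obtain ⟨r, hr⟩ := spanJ z hz
    rw [hr, mul_assoc, hide]
  have projJ : Module.Projective A (Ideal.span ({e} : Set A) : Ideal A) :=
    Module.Projective.of_split (Ideal.span ({e} : Set A) : Ideal A).subtype pJ hsplit
  have projI : Module.Projective A (Ideal.span ({Bα} : Set A) : Ideal A) :=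
    Module.Projective.of_equiv equiv.symm
  exact ⟨hide, ⟨equiv⟩, projI⟩
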